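/- arXiv:0902.1951 — 4 statements merged into one kernel-verified Lean document; each statement's English description precedes it below -/
import Mathlib

section
/- Let Ω ⊆ ℂ be a nonempty connected open set and let f, g : Ω → ℂ be holomorphic functions with nowhere-vanishing derivatives. If S(f)(z) = S(g)(z) for all z ∈ Ω, then f and g differ by post-composition with a Möbius transformation: there exist a, b, c, d ∈ ℂ with ad − bc = 1 such that for every z ∈ Ω, c·g(z) + d ≠ 0 and f(z) = (a·g(z) + b)/(c·g(z) + d). -/
open Filter Set Metric Topology

/-- The Schwarzian derivative `S(f) = (f''/f')' - (1/2) (f''/f')²`. -/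
noncomputable def schwarzian (f : ℂ → ℂ) : ℂ → ℂ := fun z =>
  deriv (fun w => deriv (deriv f) w / deriv f w) z -
    (1 / 2) * (deriv (deriv f) z / deriv f z) ^ 2


lemma analyticAt_deriv' {f : ℂ → ℂ} {x : ℂ} (h : AnalyticAt ℂ f x) :
    AnalyticAt ℂ (deriv f) x := by
  obtain ⟨s, hs, hf⟩ := h.exists_mem_nhds_analyticOnNhd
  exact hf.deriv _ (mem_of_mem_nhds hs)

lemma ev_zero_of_ode {q Q : ℂ → ℂ} {z₀ : ℂ} (hq : AnalyticAt ℂ q z₀)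
    (hQ : ContinuousAt Q z₀) (h0 : q z₀ = 0)
    (hode : ∀ᶠ z in 𝓝 z₀, deriv q z = Q z * q z) :
    ∀ᶠ z in 𝓝 z₀, q z = 0 := by
  by_contra hne
  have hord : analyticOrderAt q z₀ ≠ ⊤ := fun h => hne (analyticOrderAt_eq_top.mp h)
  obtain ⟨n, hn⟩ := WithTop.ne_top_iff_exists.mp hord
  obtain ⟨u, hu, hu0, hqu⟩ := (hq.analyticOrderAt_eq_natCast (n := n)).mp hn.symm
  simp only [smul_eq_mul] at hqu
  match n with
  | 0 =>
    apply hu0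
    have := hqu.self_of_nhds
    simpa [h0] using this.symm
  | (m+1) =>
    have hqu' : q =ᶠ[𝓝 z₀] fun z => (z - z₀) ^ (m+1) * u z := hqu
    have hderiv : ∀ᶠ z in 𝓝 z₀,
        deriv q z = ((m:ℂ)+1) * (z - z₀) ^ m * u z + (z - z₀) ^ (m+1) * deriv u z := by
      filter_upwards [hqu'.deriv, hu.eventually_analyticAt] with z h1z huz
      rw [h1z]
      have h2 : HasDerivAt (fun w => (w - z₀) ^ (m+1)) (((m+1 : ℕ) : ℂ) * (z - z₀) ^ m * 1) z := by
        have h3 : HasDerivAt (fun w => (w - z₀) ^ (m+1)) _ z :=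
          ((hasDerivAt_id z).sub_const z₀).pow (m+1)
        simpa using h3
      have hd : HasDerivAt (fun w => (w - z₀) ^ (m+1) * u w) _ z :=
        h2.mul huz.differentiableAt.hasDerivAt
      rw [hd.deriv]
      push_cast
      ring
    have hcomb : ∀ᶠ z in 𝓝 z₀,
        (z - z₀) ^ m * (((m:ℂ)+1) * u z + (z - z₀) * (deriv u z - Q z * u z)) = 0 := by
      filter_upwards [hderiv, hode, hqu'] with z h1 h2 h3
      have h4 : ((m:ℂ)+1) * (z - z₀) ^ m * u z + (z - z₀) ^ (m+1) * deriv u z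
          = Q z * ((z - z₀) ^ (m+1) * u z) := by rw [← h1, h2, h3]
      linear_combination h4
    set v : ℂ → ℂ := fun z => ((m:ℂ)+1) * u z + (z - z₀) * (deriv u z - Q z * u z) with hv_def
    have hvc : ContinuousAt v z₀ := by
      have hu' : ContinuousAt (deriv u) z₀ := (analyticAt_deriv' hu).continuousAt
      have huc := hu.continuousAt
      exact (continuousAt_const.mul huc).add
        (((continuousAt_id.sub continuousAt_const)).mul (hu'.sub (hQ.mul huc)))
    have hv1 : Tendsto v (𝓝[≠] z₀) (𝓝 (((m:ℂ)+1) * u z₀)) := by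
      have := hvc.continuousWithinAt (s := {z₀}ᶜ)
      simpa [hv_def, ContinuousWithinAt] using this
    have hv0 : Tendsto v (𝓝[≠] z₀) (𝓝 0) := by
      have hev : v =ᶠ[𝓝[≠] z₀] fun _ => 0 := by
        filter_upwards [hcomb.filter_mono nhdsWithin_le_nhds, self_mem_nhdsWithin] with z h1 h2
        have hz : (z - z₀) ^ m ≠ 0 := pow_ne_zero _ (sub_ne_zero.mpr h2)
        exact (mul_eq_zero.mp h1).resolve_left hz
      rw [tendsto_congr' hev]
      exact tendsto_const_nhds
    have heq := tendsto_nhds_unique hv1 hv0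
    have hm : ((m:ℂ)+1) ≠ 0 := by
      have := Nat.cast_add_one_ne_zero (R := ℂ) m
      push_cast at this ⊢
      exact this
    exact hu0 (by
      rcases mul_eq_zero.mp heq with h | h
      · exact absurd h hm
      · exact h)

/-- Local uniqueness: same Schwarzian + same 2-jet at `z₀` implies locally equal. -/
lemma eventuallyEq_of_schwarzian_eq {f h : ℂ → ℂ} {U : Set ℂ} {z₀ : ℂ}
    (hU : IsOpen U) (hz₀ : z₀ ∈ U)
    (hfa : AnalyticOnNhd ℂ f U) (hha : AnalyticOnNhd ℂ h U)
    (hf' : ∀ z ∈ U, deriv f z ≠ 0) (hh' : ∀ z ∈ U, deriv h z ≠ 0)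
    (hS : ∀ z ∈ U, schwarzian f z = schwarzian h z)
    (e0 : f z₀ = h z₀) (e1 : deriv f z₀ = deriv h z₀)
    (e2 : deriv (deriv f) z₀ = deriv (deriv h) z₀) :
    f =ᶠ[𝓝 z₀] h := by
  have hfa1 : AnalyticOnNhd ℂ (deriv f) U := hfa.deriv
  have hfa2 : AnalyticOnNhd ℂ (deriv (deriv f)) U := hfa1.deriv
  have hha1 : AnalyticOnNhd ℂ (deriv h) U := hha.deriv
  have hha2 : AnalyticOnNhd ℂ (deriv (deriv h)) U := hha1.deriv
  -- the log-derivative difference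
  have hPfA : ∀ z ∈ U, AnalyticAt ℂ (fun w => deriv (deriv f) w / deriv f w) z :=
    fun z hz => (hfa2 z hz).div (hfa1 z hz) (hf' z hz)
  have hPhA : ∀ z ∈ U, AnalyticAt ℂ (fun w => deriv (deriv h) w / deriv h w) z :=
    fun z hz => (hha2 z hz).div (hha1 z hz) (hh' z hz)
  have hode : ∀ z ∈ U,
      deriv (fun w => deriv (deriv f) w / deriv f w - deriv (deriv h) w / deriv h w) z =
        ((deriv (deriv f) z / deriv f z + deriv (deriv h) z / deriv h z) / 2) *
          (deriv (deriv f) z / deriv f z - deriv (deriv h) z / deriv h z) := by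
    intro z hz
    rw [deriv_fun_sub (hPfA z hz).differentiableAt (hPhA z hz).differentiableAt]
    have hSz := hS z hz
    simp only [schwarzian] at hSz
    linear_combination hSz
  have hq0 : ∀ᶠ z in 𝓝 z₀,
      deriv (deriv f) z / deriv f z - deriv (deriv h) z / deriv h z = 0 := by
    have hqA : AnalyticAt ℂ
        (fun w => deriv (deriv f) w / deriv f w - deriv (deriv h) w / deriv h w) z₀ :=
      ((hPfA z₀ hz₀).sub (hPhA z₀ hz₀))
    apply ev_zero_of_ode hqA
      (Q := fun z => (deriv (deriv f) z / deriv f z + deriv (deriv h) z / deriv h z) / 2)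
    · exact ((hPfA z₀ hz₀).continuousAt.add (hPhA z₀ hz₀).continuousAt).div_const 2
    · rw [e1, e2, sub_self]
    · filter_upwards [hU.mem_nhds hz₀] with z hz using hode z hz
  -- pick a ball
  obtain ⟨s, hsnhds, hs⟩ := hq0.exists_mem
  obtain ⟨r, hr0, hball⟩ := Metric.mem_nhds_iff.mp (inter_mem hsnhds (hU.mem_nhds hz₀))
  have hballU : ball z₀ r ⊆ U := fun x hx => (hball hx).2
  have hballq : ∀ x ∈ ball z₀ r,
      deriv (deriv f) x / deriv f x = deriv (deriv h) x / deriv h x := by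
    intro x hx
    exact sub_eq_zero.mp (hs _ (hball hx).1)
  -- f' / h' is constant on the ball
  have hconst : ∀ (w : ℂ → ℂ), (∀ x ∈ ball z₀ r, HasDerivAt w 0 x) →
      ∀ x ∈ ball z₀ r, w x = w z₀ := by
    intro w hw x hx
    have hb := (convex_ball z₀ r).norm_image_sub_le_of_norm_hasDerivWithin_le
      (f' := fun _ => (0:ℂ)) (C := 0) (fun y hy => (hw y hy).hasDerivWithinAt)
      (fun y _ => by simp) (mem_ball_self hr0) hx
    have h1 : ‖w x - w z₀‖ ≤ 0 := by simpa using hb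
    exact sub_eq_zero.mp (norm_le_zero_iff.mp h1)
  -- derivatives agree on the ball
  have hderiv_eq : ∀ x ∈ ball z₀ r, deriv f x = deriv h x := by
    have hwd : ∀ x ∈ ball z₀ r, HasDerivAt (fun w => deriv f w / deriv h w) 0 x := by
      intro x hx
      have hxU := hballU hx
      have hdf : HasDerivAt (deriv f) (deriv (deriv f) x) x :=
        (hfa1 x hxU).differentiableAt.hasDerivAt
      have hdh : HasDerivAt (deriv h) (deriv (deriv h) x) x :=
        (hha1 x hxU).differentiableAt.hasDerivAt
      have hd := hdf.div hdh (hh' x hxU)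
      have hnum : deriv (deriv f) x * deriv h x - deriv f x * deriv (deriv h) x = 0 := by
        have hb := hballq x hx
        field_simp [hf' x hxU, hh' x hxU] at hb
        linear_combination hb
      rw [show (0:ℂ) = (deriv (deriv f) x * deriv h x - deriv f x * deriv (deriv h) x) /
        (deriv h x) ^ 2 by rw [hnum]; simp]
      exact hd
    intro x hx
    have := hconst _ hwd x hx
    have hx0 : deriv f z₀ / deriv h z₀ = 1 := by
      rw [e1, div_self (hh' z₀ hz₀)]
    rw [hx0] at this
    have := (div_eq_one_iff_eq (hh' x (hballU hx))).mp this
    exact this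
  -- f = h on the ball
  have hfh : ∀ x ∈ ball z₀ r, f x = h x := by
    have hwd : ∀ x ∈ ball z₀ r, HasDerivAt (fun w => f w - h w) 0 x := by
      intro x hx
      have hxU := hballU hx
      have hdf : HasDerivAt f (deriv f x) x := (hfa x hxU).differentiableAt.hasDerivAt
      have hdh : HasDerivAt h (deriv h x) x := (hha x hxU).differentiableAt.hasDerivAt
      have := hdf.sub hdh
      rwa [hderiv_eq x hx, sub_self] at this
    intro x hx
    have := hconst _ hwd x hx
    rw [e0, sub_self] at this
    exact sub_eq_zero.mp this
  filter_upwards [ball_mem_nhds z₀ hr0] with x hx using hfh x hx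

/-- Two holomorphic functions with nowhere-vanishing derivatives on a nonempty
connected open set that have the same Schwarzian derivative differ by
post-composition with a Möbius transformation. -/
theorem eq_mobius_comp_of_schwarzian_eq (Ω : Set ℂ) (hΩ : IsOpen Ω) (hconn : IsConnected Ω)
    (f g : ℂ → ℂ)
    (hf : DifferentiableOn ℂ f Ω) (hf' : ∀ z ∈ Ω, deriv f z ≠ 0)
    (hg : DifferentiableOn ℂ g Ω) (hg' : ∀ z ∈ Ω, deriv g z ≠ 0)
    (hS : ∀ z ∈ Ω, schwarzian f z = schwarzian g z) :
    ∃ a b c d : ℂ, a * d - b * c = 1 ∧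
      ∀ z ∈ Ω, c * g z + d ≠ 0 ∧ f z = (a * g z + b) / (c * g z + d) := by
  obtain ⟨z₀, hz₀⟩ := hconn.nonempty
  have hfa : AnalyticOnNhd ℂ f Ω := hf.analyticOnNhd hΩ
  have hga : AnalyticOnNhd ℂ g Ω := hg.analyticOnNhd hΩ
  have hG1 : deriv g z₀ ≠ 0 := hg' z₀ hz₀
  have hF1 : deriv f z₀ ≠ 0 := hf' z₀ hz₀
  -- the square root e of g'(z₀)/f'(z₀)
  obtain ⟨e, he_def⟩ : ∃ e : ℂ, e = Complex.exp (Complex.log (deriv g z₀ / deriv f z₀) / 2) :=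
    ⟨_, rfl⟩
  have he : e ≠ 0 := by rw [he_def]; exact Complex.exp_ne_zero _
  have he2 : e ^ 2 = deriv g z₀ / deriv f z₀ := by
    rw [he_def, sq, ← Complex.exp_add]
    rw [show Complex.log (deriv g z₀ / deriv f z₀) / 2 +
        Complex.log (deriv g z₀ / deriv f z₀) / 2 = Complex.log (deriv g z₀ / deriv f z₀) by ring]
    exact Complex.exp_log (div_ne_zero hG1 hF1)
  -- Möbius coefficients
  obtain ⟨c, hc_def⟩ : ∃ c : ℂ,
      c = (e * deriv (deriv g) z₀ - e ^ 3 * deriv (deriv f) z₀) / (2 * (deriv g z₀) ^ 2) :=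
    ⟨_, rfl⟩
  obtain ⟨d, hd_def⟩ : ∃ d : ℂ, d = e - c * g z₀ := ⟨_, rfl⟩
  obtain ⟨a, ha_def⟩ : ∃ a : ℂ, a = 1 / e + c * f z₀ := ⟨_, rfl⟩
  obtain ⟨b, hb_def⟩ : ∃ b : ℂ, b = e * f z₀ - a * g z₀ := ⟨_, rfl⟩
  have hdet : a * d - b * c = 1 := by
    rw [hb_def, hd_def, ha_def]
    field_simp
    ring
  have heU : c * g z₀ + d = e := by rw [hd_def]; ring
  -- the good open set
  obtain ⟨U, hU_def⟩ : ∃ U : Set ℂ, U = {z | z ∈ Ω ∧ c * g z + d ≠ 0} := ⟨_, rfl⟩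
  have hUo : IsOpen U := by
    have hcont : ContinuousOn (fun z => c * g z + d) Ω :=
      (continuousOn_const.mul hg.continuousOn).add continuousOn_const
    have h1 : IsOpen (Ω ∩ (fun z => c * g z + d) ⁻¹' {(0:ℂ)}ᶜ) :=
      ContinuousOn.isOpen_inter_preimage hcont hΩ
        (isOpen_compl_singleton : IsOpen ({(0:ℂ)}ᶜ))
    rw [hU_def]
    exact h1
  have hUne : ∀ z ∈ U, c * g z + d ≠ 0 := by
    intro z hz; rw [hU_def] at hz; exact hz.2
  have hUΩ : ∀ z ∈ U, z ∈ Ω := by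
    intro z hz; rw [hU_def] at hz; exact hz.1
  have hz₀U : z₀ ∈ U := by
    rw [hU_def]
    exact ⟨hz₀, by rw [heU]; exact he⟩
  obtain ⟨M, hM_def⟩ : ∃ M : ℂ → ℂ, M = fun z => (a * g z + b) / (c * g z + d) := ⟨_, rfl⟩
  -- basic derivative facts
  have hgd : ∀ z ∈ Ω, HasDerivAt g (deriv g z) z := fun z hz =>
    (hga z hz).differentiableAt.hasDerivAt
  have hgd2 : ∀ z ∈ Ω, HasDerivAt (deriv g) (deriv (deriv g) z) z := fun z hz =>
    (hga.deriv z hz).differentiableAt.hasDerivAt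
  have hden : ∀ z ∈ U, HasDerivAt (fun w => c * g w + d) (c * deriv g z) z := fun z hz =>
    ((hgd z (hUΩ z hz)).const_mul c).add_const d
  have hnum : ∀ z ∈ U, HasDerivAt (fun w => a * g w + b) (a * deriv g z) z := fun z hz =>
    ((hgd z (hUΩ z hz)).const_mul a).add_const b
  -- first derivative of M
  have key1 : ∀ z ∈ U, HasDerivAt M (deriv g z / (c * g z + d) ^ 2) z := by
    intro z hz
    have h1 := (hnum z hz).div (hden z hz) (hUne z hz)
    have hval : deriv g z / (c * g z + d) ^ 2
        = (a * deriv g z * (c * g z + d) - (a * g z + b) * (c * deriv g z))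
          / (c * g z + d) ^ 2 := by
      have hval' : deriv g z
          = a * deriv g z * (c * g z + d) - (a * g z + b) * (c * deriv g z) := by
        linear_combination (deriv g z) * hdet.symm
      rw [← hval']
    rw [hM_def, hval]
    exact h1
  have key2 : ∀ z ∈ U, deriv M z = deriv g z / (c * g z + d) ^ 2 :=
    fun z hz => (key1 z hz).deriv
  have key2' : ∀ z ∈ U, deriv M =ᶠ[𝓝 z] fun w => deriv g w / (c * g w + d) ^ 2 :=
    fun z hz => eventuallyEq_of_mem (hUo.mem_nhds hz) (fun w hw => key2 w hw)
  -- second derivative of M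
  have key3 : ∀ z ∈ U, HasDerivAt (fun w => deriv g w / (c * g w + d) ^ 2)
      (deriv (deriv g) z / (c * g z + d) ^ 2 - 2 * c * (deriv g z) ^ 2 / (c * g z + d) ^ 3) z := by
    intro z hz
    have hpow : HasDerivAt (fun w => (c * g w + d) ^ 2)
        (((2:ℕ):ℂ) * (c * g z + d) ^ 1 * (c * deriv g z)) z := (hden z hz).pow 2
    have h1 := (hgd2 z (hUΩ z hz)).div hpow (pow_ne_zero 2 (hUne z hz))
    refine h1.congr_deriv ?_
    field_simp [hUne z hz]
    ring
  have key4 : ∀ z ∈ U, deriv (deriv M) z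
      = deriv (deriv g) z / (c * g z + d) ^ 2 - 2 * c * (deriv g z) ^ 2 / (c * g z + d) ^ 3 := by
    intro z hz
    rw [(key2' z hz).deriv_eq]
    exact (key3 z hz).deriv
  -- M nonvanishing derivative and analyticity on U
  have hM' : ∀ z ∈ U, deriv M z ≠ 0 := by
    intro z hz
    rw [key2 z hz]
    exact div_ne_zero (hg' z (hUΩ z hz)) (pow_ne_zero 2 (hUne z hz))
  have hMa : AnalyticOnNhd ℂ M U := by
    rw [hM_def]
    exact fun z hz =>
      ((analyticAt_const.mul (hga z (hUΩ z hz))).add analyticAt_const).div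
        ((analyticAt_const.mul (hga z (hUΩ z hz))).add analyticAt_const) (hUne z hz)
  -- the quotient deriv2 M / deriv M on U
  have key5 : ∀ z ∈ U, deriv (deriv M) z / deriv M z
      = deriv (deriv g) z / deriv g z - 2 * c * deriv g z / (c * g z + d) := by
    intro z hz
    rw [key4 z hz, key2 z hz]
    field_simp [hUne z hz, hg' z (hUΩ z hz)]
  -- Möbius invariance of the Schwarzian on U
  have key6 : ∀ z ∈ U, schwarzian M z = schwarzian g z := by
    intro z hz
    have hz1 := hUΩ z hz
    have hPga : AnalyticAt ℂ (fun w => deriv (deriv g) w / deriv g w) z :=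
      ((hga.deriv.deriv) z hz1).div ((hga.deriv) z hz1) (hg' z hz1)
    have hRa : AnalyticAt ℂ (fun w => 2 * c * deriv g w / (c * g w + d)) z :=
      (analyticAt_const.mul ((hga.deriv) z hz1)).div
        ((analyticAt_const.mul (hga z hz1)).add analyticAt_const) (hUne z hz)
    have hPMev : (fun w => deriv (deriv M) w / deriv M w)
        =ᶠ[𝓝 z] fun w => deriv (deriv g) w / deriv g w - 2 * c * deriv g w / (c * g w + d) :=
      eventuallyEq_of_mem (hUo.mem_nhds hz) (fun w hw => key5 w hw)
    have hdR : HasDerivAt (fun w => 2 * c * deriv g w / (c * g w + d))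
        (2 * c * deriv (deriv g) z / (c * g z + d)
          - 2 * c ^ 2 * (deriv g z) ^ 2 / (c * g z + d) ^ 2) z := by
      have h1 := ((hgd2 z hz1).const_mul (2 * c)).div (hden z hz) (hUne z hz)
      refine h1.congr_deriv ?_
      field_simp [hUne z hz]
    have hder : deriv (fun w => deriv (deriv M) w / deriv M w) z
        = deriv (fun w => deriv (deriv g) w / deriv g w) z
          - (2 * c * deriv (deriv g) z / (c * g z + d)
            - 2 * c ^ 2 * (deriv g z) ^ 2 / (c * g z + d) ^ 2) := by
      rw [hPMev.deriv_eq, deriv_fun_sub hPga.differentiableAt hRa.differentiableAt, hdR.deriv]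
    simp only [schwarzian]
    rw [hder, key5 z hz]
    have hg1 : deriv g z ≠ 0 := hg' z hz1
    have he1 : c * g z + d ≠ 0 := hUne z hz
    field_simp
    ring
  -- 2-jet matching at z₀
  have jet0 : f z₀ = M z₀ := by
    rw [hM_def]
    simp only [heU, hb_def]
    field_simp
    ring
  have jet1 : deriv f z₀ = deriv M z₀ := by
    rw [key2 z₀ hz₀U, heU, he2]
    field_simp
  have jet2 : deriv (deriv f) z₀ = deriv (deriv M) z₀ := by
    rw [key4 z₀ hz₀U, heU, hc_def]
    field_simp [he, hG1]
    ring
  -- local equality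
  have hloc : f =ᶠ[𝓝 z₀] M :=
    eventuallyEq_of_schwarzian_eq hUo hz₀U (fun z hz => hfa z (hUΩ z hz)) hMa
      (fun z hz => hf' z (hUΩ z hz)) hM'
      (fun z hz => (hS z (hUΩ z hz)).trans (key6 z hz).symm) jet0 jet1 jet2
  -- globalize via the identity principle
  obtain ⟨F, hF_def⟩ : ∃ F : ℂ → ℂ, F = fun z => f z * (c * g z + d) - (a * g z + b) := ⟨_, rfl⟩
  have hFa : AnalyticOnNhd ℂ F Ω := by
    rw [hF_def]
    exact fun z hz =>
      ((hfa z hz).mul ((analyticAt_const.mul (hga z hz)).add analyticAt_const)).sub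
        ((analyticAt_const.mul (hga z hz)).add analyticAt_const)
  have hF0 : F =ᶠ[𝓝 z₀] fun _ => 0 := by
    filter_upwards [hloc, hUo.mem_nhds hz₀U] with z hz hzU
    rw [hF_def]
    simp only
    rw [hz, hM_def]
    simp only
    rw [div_mul_cancel₀ _ (hUne z hzU), sub_self]
  have hFzero : Set.EqOn F (fun _ => 0) Ω :=
    hFa.eqOn_of_preconnected_of_eventuallyEq (fun z _ => analyticAt_const)
      hconn.isPreconnected hz₀ hF0
  refine ⟨a, b, c, d, hdet, ?_⟩
  intro z hz
  have hFz : f z * (c * g z + d) - (a * g z + b) = 0 := by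
    have h1 := hFzero hz
    rw [hF_def] at h1
    exact h1
  have hne : c * g z + d ≠ 0 := by
    intro h0
    have h1 : a * g z + b = 0 := by linear_combination f z * h0 - hFz
    have h2 : (1:ℂ) = 0 := by linear_combination hdet.symm + a * h0 - c * h1
    exact one_ne_zero h2
  refine ⟨hne, ?_⟩
  rw [eq_div_iff hne]
  linear_combination hFz
end

section
/- Let Ω ⊆ ℂ be open and let f : Ω → ℂ be holomorphic with nowhere-vanishing derivative. Suppose G : Ω → M₂(ℂ) is a holomorphic matrix-valued map (each entry holomorphic) with det G(z) = 1 for all z ∈ Ω and such that for each z ∈ Ω the Möbius transformation w ↦ (G(z)₀₀·w + G(z)₀₁)/(G(z)₁₀·w + G(z)₁₁) osculates f at z (same value, first derivative, and second derivative at z, and G(z)₁₀·z + G(z)₁₁ ≠ 0). Then the Darboux derivative of G is determined by the Schwarzian derivative of f: for all z ∈ Ω, G(z)⁻¹ · G'(z) = −(1/2)·S(f)(z) · [[z, −z²],[1, −z]], where G' denotes the entrywise derivative and [[z, −z²],[1, −z]] is the 2×2 matrix with rows (z, −z²) and (1, −z). -/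
open Filter

lemma mobius_hasDerivAt (A B C D x : ℂ) (hdet : A * D - B * C = 1) (h : C * x + D ≠ 0) :
    HasDerivAt (fun w => (A * w + B) / (C * w + D)) (1 / (C * x + D) ^ 2) x := by
  have h1 : HasDerivAt (fun w : ℂ => A * w + B) A x := by
    simpa using ((hasDerivAt_id x).const_mul A).add_const B
  have h2 : HasDerivAt (fun w : ℂ => C * w + D) C x := by
    simpa using ((hasDerivAt_id x).const_mul C).add_const D
  have := h1.div h2 h
  have e : A * (C * x + D) - (A * x + B) * C = 1 := by linear_combination hdet
  rw [e] at this
  exact this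

lemma mobius_deriv2 (A B C D x : ℂ) (hdet : A * D - B * C = 1) (h : C * x + D ≠ 0) :
    deriv (deriv (fun w => (A * w + B) / (C * w + D))) x = -2 * C / (C * x + D) ^ 3 := by
  have hU : IsOpen {w : ℂ | C * w + D ≠ 0} := by
    have : Continuous fun w : ℂ => C * w + D := by continuity
    exact isOpen_compl_singleton.preimage this
  have hev : deriv (fun w => (A * w + B) / (C * w + D)) =ᶠ[nhds x]
      fun w => 1 / (C * w + D) ^ 2 :=
    eventually_of_mem (hU.mem_nhds h) fun w hw => (mobius_hasDerivAt A B C D w hdet hw).deriv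
  rw [hev.deriv_eq]
  have h2 : HasDerivAt (fun w : ℂ => C * w + D) C x := by
    simpa using ((hasDerivAt_id x).const_mul C).add_const D
  have hp : HasDerivAt (fun w : ℂ => (C * w + D) ^ 2) (2 * (C * x + D) ^ 1 * C) x := h2.pow 2
  have h3 : HasDerivAt (fun w : ℂ => 1 / (C * w + D) ^ 2)
      (-(2 * (C * x + D) ^ 1 * C) / ((C * x + D) ^ 2) ^ 2) x := by
    simpa [one_div, Pi.inv_def] using hp.inv (pow_ne_zero 2 h)
  rw [h3.deriv]
  field_simp


lemma aux_alg (z a b c d a' b' c' d' f0 g1 g2 g3 S : ℂ)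
    (hp : c * z + d ≠ 0)
    (hdet : a * d - b * c = 1)
    (k2 : (c * z + d) ^ 2 * g1 = 1)
    (k3 : 2 * c * g1 + g2 * (c * z + d) = 0)
    (k4 : a * z + b = f0 * (c * z + d))
    (e2 : 2 * (c * z + d) * (c' * z + c + d') * g1 + (c * z + d) ^ 2 * g2 = 0)
    (e3 : 2 * c' * g1 + 2 * c * g2 + (g3 * (c * z + d) + g2 * (c' * z + c + d')) = 0)
    (e4 : a' * z + a + b' - (g1 * (c * z + d) + f0 * (c' * z + c + d')) = 0)
    (ea : a' - (g2 * (c * z + d) + g1 * (c' * z + c + d') + c' * f0 + c * g1) = 0)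
    (hS : S = (g3 * g1 - g2 * g2) / g1 ^ 2 - (1 / 2) * (g2 / g1) ^ 2) :
    d * a' - b * c' = -(1 / 2) * S * z ∧ d * b' - b * d' = (1 / 2) * S * z ^ 2 ∧
      -(c * a') + a * c' = -(1 / 2) * S ∧ -(c * b') + a * d' = (1 / 2) * S * z := by
  have hg1 : g1 ≠ 0 := by
    intro h
    rw [h, mul_zero] at k2
    exact one_ne_zero k2.symm
  have h2g1 : (2 : ℂ) * g1 ≠ 0 := mul_ne_zero two_ne_zero hg1
  have h2g1sq : (2 : ℂ) * g1 ^ 2 ≠ 0 := mul_ne_zero two_ne_zero (pow_ne_zero 2 hg1)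
  have hSv : 2 * S * g1 ^ 2 = 2 * g3 * g1 - 3 * g2 ^ 2 := by
    rw [hS]; field_simp; ring
  have hp' : 2 * g1 * (c' * z + c + d') = -(g2 * (c * z + d)) :=
    mul_left_cancel₀ hp (by linear_combination e2)
  have hpc : c' * z + c + d' = c :=
    mul_left_cancel₀ h2g1 (by linear_combination hp' - k3)
  have hc' : 2 * c' = -(S * (c * z + d)) :=
    mul_left_cancel₀ h2g1sq
      (by linear_combination 2 * g1 * e3 - 2 * g2 * k3 - g2 * hp' + (c * z + d) * hSv)
  have haz : a = g1 * (c * z + d) + c * f0 :=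
    mul_left_cancel₀ hp (by linear_combination hdet + c * k4 - k2)
  have ha' : a' = c' * f0 :=
    mul_left_cancel₀ h2g1 (by linear_combination 2 * g1 * ea + g1 * hp' + g1 * k3)
  have hd' : d' = -(c' * z) := by linear_combination hpc
  have hb' : b' = -(c' * f0 * z) := by
    linear_combination e4 - z * ha' - haz + f0 * hpc
  have hdb : d * f0 - b = z * g1 * (c * z + d) :=
    mul_left_cancel₀ hp (by linear_combination (-d) * k4 + z * hdet - z * k2)
  refine ⟨?_, ?_, ?_, ?_⟩
  · linear_combination d * ha' + c' * hdb + (1 / 2) * z * g1 * (c * z + d) * hc' -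
      (1 / 2) * S * z * k2
  · linear_combination d * hb' - b * hd' - c' * z * hdb -
      (1 / 2) * z ^ 2 * g1 * (c * z + d) * hc' + (1 / 2) * S * z ^ 2 * k2
  · linear_combination (-c) * ha' + c' * haz + (1 / 2) * g1 * (c * z + d) * hc' -
      (1 / 2) * S * k2
  · linear_combination (-c) * hb' + a * hd' - c' * z * haz -
      (1 / 2) * z * g1 * (c * z + d) * hc' + (1 / 2) * S * z * k2



/-- The Darboux derivative `G⁻¹ · G'` of the osculation map `G` of a locally
injective holomorphic function `f` is determined by the Schwarzian derivative:
`G(z)⁻¹ G'(z) = -(1/2) S(f)(z) · [[z, -z²],[1, -z]]`. -/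
theorem darboux_deriv_osculation (Ω : Set ℂ) (hΩ : IsOpen Ω) (f : ℂ → ℂ)
    (hf : DifferentiableOn ℂ f Ω) (hf' : ∀ z ∈ Ω, deriv f z ≠ 0)
    (G : ℂ → Matrix (Fin 2) (Fin 2) ℂ)
    (hG : ∀ i j, DifferentiableOn ℂ (fun z => G z i j) Ω)
    (hdet : ∀ z ∈ Ω, (G z).det = 1)
    (hosc : ∀ z ∈ Ω,
      G z 1 0 * z + G z 1 1 ≠ 0 ∧
      (G z 0 0 * z + G z 0 1) / (G z 1 0 * z + G z 1 1) = f z ∧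
      deriv (fun w => (G z 0 0 * w + G z 0 1) / (G z 1 0 * w + G z 1 1)) z = deriv f z ∧
      deriv (deriv (fun w => (G z 0 0 * w + G z 0 1) / (G z 1 0 * w + G z 1 1))) z =
        deriv (deriv f) z) :
    ∀ z ∈ Ω,
      (G z)⁻¹ * (Matrix.of fun i j => deriv (fun w => G w i j) z) =
        (-(1 / 2) * schwarzian f z) • !![z, -z ^ 2; 1, -z] := by
  intro z hz
  have hzm : Ω ∈ nhds z := hΩ.mem_nhds hz
  -- determinant pointwise
  have hdet2 : ∀ w ∈ Ω, G w 0 0 * G w 1 1 - G w 0 1 * G w 1 0 = 1 := fun w hw => by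
    have := hdet w hw; rwa [Matrix.det_fin_two] at this
  -- pointwise key identities on Ω
  have key : ∀ w ∈ Ω,
      (G w 1 0 * w + G w 1 1) ^ 2 * deriv f w = 1 ∧
      2 * G w 1 0 * deriv f w + deriv (deriv f) w * (G w 1 0 * w + G w 1 1) = 0 ∧
      G w 0 0 * w + G w 0 1 = f w * (G w 1 0 * w + G w 1 1) := by
    intro w hw
    obtain ⟨hp0, hval, hD1, hD2⟩ := hosc w hw
    have hdetw : G w 0 0 * G w 1 1 - G w 0 1 * G w 1 0 = 1 := hdet2 w hw
    have h1 : deriv (fun v => (G w 0 0 * v + G w 0 1) / (G w 1 0 * v + G w 1 1)) w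
        = 1 / (G w 1 0 * w + G w 1 1) ^ 2 :=
      (mobius_hasDerivAt _ _ _ _ w hdetw hp0).deriv
    have e1 : (G w 1 0 * w + G w 1 1) ^ 2 * deriv f w = 1 := by
      rw [← hD1, h1]; field_simp
    have h2 := mobius_deriv2 (G w 0 0) (G w 0 1) (G w 1 0) (G w 1 1) w hdetw hp0
    have e2' : deriv (deriv f) w = -2 * G w 1 0 / (G w 1 0 * w + G w 1 1) ^ 3 := by
      rw [← hD2, h2]
    have e2 : 2 * G w 1 0 * deriv f w + deriv (deriv f) w * (G w 1 0 * w + G w 1 1) = 0 := by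
      rw [e2']
      have hg : deriv f w = 1 / (G w 1 0 * w + G w 1 1) ^ 2 := by
        field_simp at e1 ⊢
        linear_combination e1
      rw [hg]
      field_simp
      ring
    exact ⟨e1, e2, (div_eq_iff hp0).mp hval⟩
  -- key at z
  obtain ⟨hp0, hval, _, _⟩ := hosc z hz
  have k2 := (key z hz).1
  have k3 := (key z hz).2.1
  have k4 := (key z hz).2.2
  have hdetz := hdet2 z hz
  have hg1 : deriv f z ≠ 0 := hf' z hz
  -- differentiability
  have han : AnalyticOnNhd ℂ f Ω := hf.analyticOnNhd hΩ
  have hfz : HasDerivAt f (deriv f z) z := ((hf.differentiableAt hzm)).hasDerivAt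
  have hF1 : HasDerivAt (deriv f) (deriv (deriv f) z) z :=
    ((han.deriv z hz).differentiableAt).hasDerivAt
  have hF2 : HasDerivAt (deriv (deriv f)) (deriv (deriv (deriv f)) z) z :=
    ((han.deriv.deriv z hz).differentiableAt).hasDerivAt
  have hAd : HasDerivAt (fun w => G w 0 0) (deriv (fun w => G w 0 0) z) z :=
    ((hG 0 0).differentiableAt hzm).hasDerivAt
  have hBd : HasDerivAt (fun w => G w 0 1) (deriv (fun w => G w 0 1) z) z :=
    ((hG 0 1).differentiableAt hzm).hasDerivAt
  have hCd : HasDerivAt (fun w => G w 1 0) (deriv (fun w => G w 1 0) z) z :=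
    ((hG 1 0).differentiableAt hzm).hasDerivAt
  have hDd : HasDerivAt (fun w => G w 1 1) (deriv (fun w => G w 1 1) z) z :=
    ((hG 1 1).differentiableAt hzm).hasDerivAt
  have hPd : HasDerivAt (fun w => G w 1 0 * w + G w 1 1)
      (deriv (fun w => G w 1 0) z * z + G z 1 0 + deriv (fun w => G w 1 1) z) z := by
    have := (hCd.mul (hasDerivAt_id z)).add hDd
    simpa [Pi.mul_def, Pi.add_def] using this
  -- derivative equations via eventual equalities
  have e2 : 2 * (G z 1 0 * z + G z 1 1) *
      (deriv (fun w => G w 1 0) z * z + G z 1 0 + deriv (fun w => G w 1 1) z) * deriv f z +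
      (G z 1 0 * z + G z 1 1) ^ 2 * deriv (deriv f) z = 0 := by
    have hev : (fun w => (G w 1 0 * w + G w 1 1) ^ 2 * deriv f w) =ᶠ[nhds z]
        fun _ => (1 : ℂ) := eventually_of_mem hzm fun w hw => (key w hw).1
    have hL := (hPd.pow 2).mul hF1
    have hR : HasDerivAt (fun w => (G w 1 0 * w + G w 1 1) ^ 2 * deriv f w) 0 z :=
      (hasDerivAt_const z (1 : ℂ)).congr_of_eventuallyEq hev
    have := hL.unique hR
    push_cast [Pi.pow_apply] at this
    linear_combination this
  have e3 : 2 * deriv (fun w => G w 1 0) z * deriv f z + 2 * G z 1 0 * deriv (deriv f) z +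
      (deriv (deriv (deriv f)) z * (G z 1 0 * z + G z 1 1) + deriv (deriv f) z *
        (deriv (fun w => G w 1 0) z * z + G z 1 0 + deriv (fun w => G w 1 1) z)) = 0 := by
    have hev : (fun w => 2 * G w 1 0 * deriv f w +
        deriv (deriv f) w * (G w 1 0 * w + G w 1 1)) =ᶠ[nhds z] fun _ => (0 : ℂ) :=
      eventually_of_mem hzm fun w hw => (key w hw).2.1
    have hL := ((hCd.const_mul (2 : ℂ)).mul hF1).add (hF2.mul hPd)
    have hR : HasDerivAt (fun w => 2 * G w 1 0 * deriv f w +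
        deriv (deriv f) w * (G w 1 0 * w + G w 1 1)) 0 z :=
      (hasDerivAt_const z (0 : ℂ)).congr_of_eventuallyEq hev
    have := hL.unique hR
    linear_combination this
  have e4 : deriv (fun w => G w 0 0) z * z + G z 0 0 + deriv (fun w => G w 0 1) z -
      (deriv f z * (G z 1 0 * z + G z 1 1) + f z *
        (deriv (fun w => G w 1 0) z * z + G z 1 0 + deriv (fun w => G w 1 1) z)) = 0 := by
    have hev : (fun w => G w 0 0 * w + G w 0 1 - f w * (G w 1 0 * w + G w 1 1))
        =ᶠ[nhds z] fun _ => (0 : ℂ) :=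
      eventually_of_mem hzm fun w hw => sub_eq_zero.mpr (key w hw).2.2
    have hL := ((hAd.mul (hasDerivAt_id z)).add hBd).sub (hfz.mul hPd)
    have hR : HasDerivAt (fun w => G w 0 0 * w + G w 0 1 - f w * (G w 1 0 * w + G w 1 1))
        0 z := (hasDerivAt_const z (0 : ℂ)).congr_of_eventuallyEq hev
    have := hL.unique hR
    simp only [id_eq] at this
    linear_combination this
  have ea : deriv (fun w => G w 0 0) z -
      (deriv (deriv f) z * (G z 1 0 * z + G z 1 1) + deriv f z *
        (deriv (fun w => G w 1 0) z * z + G z 1 0 + deriv (fun w => G w 1 1) z) +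
        deriv (fun w => G w 1 0) z * f z + G z 1 0 * deriv f z) = 0 := by
    have keyA : ∀ w ∈ Ω, G w 0 0 =
        deriv f w * (G w 1 0 * w + G w 1 1) + G w 1 0 * f w := by
      intro w hw
      refine mul_left_cancel₀ (hosc w hw).1 ?_
      linear_combination hdet2 w hw + G w 1 0 * (key w hw).2.2 - (key w hw).1
    have hev : (fun w => G w 0 0 -
        (deriv f w * (G w 1 0 * w + G w 1 1) + G w 1 0 * f w)) =ᶠ[nhds z]
        fun _ => (0 : ℂ) :=
      eventually_of_mem hzm fun w hw => sub_eq_zero.mpr (keyA w hw)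
    have hL := hAd.sub ((hF1.mul hPd).add (hCd.mul hfz))
    have hR : HasDerivAt (fun w => G w 0 0 -
        (deriv f w * (G w 1 0 * w + G w 1 1) + G w 1 0 * f w)) 0 z :=
      (hasDerivAt_const z (0 : ℂ)).congr_of_eventuallyEq hev
    have := hL.unique hR
    linear_combination this
  -- schwarzian value
  have hS : schwarzian f z = (deriv (deriv (deriv f)) z * deriv f z -
      deriv (deriv f) z * deriv (deriv f) z) / (deriv f z) ^ 2 -
      (1 / 2) * (deriv (deriv f) z / deriv f z) ^ 2 := by
    have hq := (hF2.div hF1 hg1).deriv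
    simp only [schwarzian]
    rw [show (fun w => deriv (deriv f) w / deriv f w) = deriv (deriv f) / deriv f from rfl, hq]
  -- apply the algebraic lemma
  obtain ⟨E00, E01, E10, E11⟩ := aux_alg z (G z 0 0) (G z 0 1) (G z 1 0) (G z 1 1)
    (deriv (fun w => G w 0 0) z) (deriv (fun w => G w 0 1) z)
    (deriv (fun w => G w 1 0) z) (deriv (fun w => G w 1 1) z)
    (f z) (deriv f z) (deriv (deriv f) z) (deriv (deriv (deriv f)) z) (schwarzian f z)
    hp0 hdetz k2 (by linear_combination k3) k4 (by linear_combination e2)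
    (by linear_combination e3) (by linear_combination e4) (by linear_combination ea)
    (by linear_combination hS)
  -- matrix computation
  have hinv : (G z)⁻¹ = !![G z 1 1, -G z 0 1; -G z 1 0, G z 0 0] := by
    rw [Matrix.inv_def, hdet z hz, Matrix.adjugate_fin_two, Ring.inverse_one, one_smul]
  rw [hinv]
  ext i j
  fin_cases i <;> fin_cases j <;>
    simp only [Matrix.mul_apply, Fin.sum_univ_two, Matrix.of_apply, Matrix.smul_apply,
      Matrix.cons_val', Matrix.cons_val_zero, Matrix.cons_val_one, Matrix.head_cons,
      Matrix.empty_val', Matrix.cons_val_fin_one, Matrix.head_fin_const, smul_eq_mul,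
      Fin.mk_zero, Fin.mk_one, Fin.isValue]
  · linear_combination E00
  · linear_combination E01
  · linear_combination E10
  · linear_combination E11
end

section
/- Let Ω ⊆ ℂ be a nonempty connected open set, let φ : Ω → ℂ be holomorphic, and let u₁, u₂ : Ω → ℂ be holomorphic solutions of the Schwarzian equation u'' + (1/2)φu = 0 whose Wronskian W = u₁'u₂ − u₁u₂' is a nonzero constant. Then on the open set Ω₀ = {z ∈ Ω : u₂(z) ≠ 0}, the quotient f = u₁/u₂ is holomorphic, its derivative satisfies f'(z) = W/u₂(z)² (in particular f' is nowhere vanishing on Ω₀), and its Schwarzian derivative satisfies S(f)(z) = φ(z) for all z ∈ Ω₀. -/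
/-- If `u₁, u₂` are holomorphic solutions of `u'' + (1/2) φ u = 0` with
nonzero constant Wronskian `W`, then on `Ω₀ = {z ∈ Ω : u₂ z ≠ 0}` the
quotient `f = u₁ / u₂` is holomorphic with `f' = W / u₂²` (in particular
`f'` is nowhere vanishing) and `S(f) = φ`. -/
theorem schwarzian_of_ode_quotient (Ω : Set ℂ) (hΩ : IsOpen Ω) (hconn : IsConnected Ω)
    (φ u₁ u₂ : ℂ → ℂ) (hφ : DifferentiableOn ℂ φ Ω)
    (hu₁ : DifferentiableOn ℂ u₁ Ω) (hu₂ : DifferentiableOn ℂ u₂ Ω)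
    (hode₁ : ∀ z ∈ Ω, deriv (deriv u₁) z + (1 / 2) * φ z * u₁ z = 0)
    (hode₂ : ∀ z ∈ Ω, deriv (deriv u₂) z + (1 / 2) * φ z * u₂ z = 0)
    (W : ℂ) (hW : W ≠ 0)
    (hWr : ∀ z ∈ Ω, deriv u₁ z * u₂ z - u₁ z * deriv u₂ z = W) :
    DifferentiableOn ℂ (fun z => u₁ z / u₂ z) {z ∈ Ω | u₂ z ≠ 0} ∧
    ∀ z ∈ {z ∈ Ω | u₂ z ≠ 0},
      deriv (fun w => u₁ w / u₂ w) z = W / u₂ z ^ 2 ∧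
      deriv (fun w => u₁ w / u₂ w) z ≠ 0 ∧
      schwarzian (fun w => u₁ w / u₂ w) z = φ z := by
  have hΩ₀ : IsOpen {z ∈ Ω | u₂ z ≠ 0} := by
    have : {z ∈ Ω | u₂ z ≠ 0} = Ω ∩ u₂ ⁻¹' {(0:ℂ)}ᶜ := by
      ext z; simp [Set.mem_setOf_eq]
    rw [this]
    exact hu₂.continuousOn.isOpen_inter_preimage hΩ isOpen_compl_singleton
  have hA2' : AnalyticOnNhd ℂ (deriv u₂) Ω := (hu₂.analyticOnNhd hΩ).deriv
  have hdiff : DifferentiableOn ℂ (fun z => u₁ z / u₂ z) {z ∈ Ω | u₂ z ≠ 0} := by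
    intro z hz
    exact ((hu₁.differentiableAt (hΩ.mem_nhds hz.1)).div
      (hu₂.differentiableAt (hΩ.mem_nhds hz.1)) hz.2).differentiableWithinAt
  refine ⟨hdiff, ?_⟩
  have hd1 : ∀ w ∈ {w ∈ Ω | u₂ w ≠ 0}, deriv (fun w => u₁ w / u₂ w) w = W / u₂ w ^ 2 := by
    intro w hw
    have h1 : DifferentiableAt ℂ u₁ w := hu₁.differentiableAt (hΩ.mem_nhds hw.1)
    have h2 : DifferentiableAt ℂ u₂ w := hu₂.differentiableAt (hΩ.mem_nhds hw.1)
    rw [deriv_fun_div h1 h2 hw.2, hWr w hw.1]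
  have hd2 : ∀ w ∈ {w ∈ Ω | u₂ w ≠ 0},
      deriv (deriv (fun w => u₁ w / u₂ w)) w = -2 * W * deriv u₂ w / u₂ w ^ 3 := by
    intro w hw
    have h2 : HasDerivAt u₂ (deriv u₂ w) w :=
      (hu₂.differentiableAt (hΩ.mem_nhds hw.1)).hasDerivAt
    have heq : deriv (fun w => u₁ w / u₂ w) =ᶠ[nhds w] fun w => W / u₂ w ^ 2 := by
      filter_upwards [hΩ₀.mem_nhds hw] with v hv using hd1 v hv
    rw [heq.deriv_eq]
    have hden : HasDerivAt (fun w => u₂ w ^ 2) (2 * u₂ w * deriv u₂ w) w := by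
      have := h2.fun_pow 2
      simpa [mul_comm, mul_assoc, mul_left_comm] using this
    have hdd : HasDerivAt (fun w => W / u₂ w ^ 2)
        ((0 * u₂ w ^ 2 - W * (2 * u₂ w * deriv u₂ w)) / (u₂ w ^ 2) ^ 2) w :=
      (hasDerivAt_const w W).div hden (pow_ne_zero 2 hw.2)
    rw [hdd.deriv, div_eq_div_iff (pow_ne_zero 2 (pow_ne_zero 2 hw.2)) (pow_ne_zero 3 hw.2)]
    ring
  have hq : ∀ w ∈ {w ∈ Ω | u₂ w ≠ 0},
      deriv (deriv (fun w => u₁ w / u₂ w)) w / deriv (fun w => u₁ w / u₂ w) w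
        = -2 * deriv u₂ w / u₂ w := by
    intro w hw
    rw [hd2 w hw, hd1 w hw, div_div_div_comm]
    rw [mul_div_assoc, mul_div_assoc, div_div_eq_mul_div, div_mul_eq_mul_div, div_div, ← mul_div_assoc,
      div_eq_div_iff (mul_ne_zero hW (pow_ne_zero 3 hw.2)) hw.2]
    ring
  intro z hz
  obtain ⟨hzΩ, hz2⟩ := hz
  have hmem : {w ∈ Ω | u₂ w ≠ 0} ∈ nhds z := hΩ₀.mem_nhds ⟨hzΩ, hz2⟩
  have hq' : deriv (fun w => deriv (deriv (fun w => u₁ w / u₂ w)) w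
        / deriv (fun w => u₁ w / u₂ w) w) z
      = deriv (fun w => -2 * deriv u₂ w / u₂ w) z := by
    apply Filter.EventuallyEq.deriv_eq
    filter_upwards [hmem] with v hv using hq v hv
  have hu₂'' : HasDerivAt (deriv u₂) (deriv (deriv u₂) z) z :=
    ((hA2' z hzΩ).differentiableAt).hasDerivAt
  have hu₂' : HasDerivAt u₂ (deriv u₂ z) z :=
    (hu₂.differentiableAt (hΩ.mem_nhds hzΩ)).hasDerivAt
  have hder : HasDerivAt (fun w => -2 * deriv u₂ w / u₂ w)
      (((-2 * deriv (deriv u₂) z) * u₂ z - (-2 * deriv u₂ z) * deriv u₂ z) / u₂ z ^ 2) z :=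
    (hu₂''.const_mul (-2)).div hu₂' hz2
  refine ⟨hd1 z ⟨hzΩ, hz2⟩, ?_, ?_⟩
  · rw [hd1 z ⟨hzΩ, hz2⟩]; exact div_ne_zero hW (pow_ne_zero 2 hz2)
  · unfold schwarzian
    rw [hq', hder.deriv, hq z ⟨hzΩ, hz2⟩]
    have hode := hode₂ z hzΩ
    have h2'' : deriv (deriv u₂) z = -(1/2) * φ z * u₂ z := by linear_combination hode
    rw [h2'']
    field_simp [hz2]
    ring
end

section
/- Let G be a group and let ρ₁, ρ₂ : G → SL(2,ℂ) be group homomorphisms into the group of 2×2 complex matrices of determinant 1. Assume ρ₁ is irreducible, i.e. there is no nonzero vector v ∈ ℂ² such that for every g ∈ G the vector ρ₁(g)·v is a scalar multiple of v. If the characters agree, i.e. tr(ρ₁(g)) = tr(ρ₂(g)) for all g ∈ G, then ρ₁ and ρ₂ are conjugate: there exists A ∈ SL(2,ℂ) such that ρ₂(g) = A·ρ₁(g)·A⁻¹ for all g ∈ G. -/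
open Matrix

abbrev Mat2 := Matrix (Fin 2) (Fin 2) ℂ

lemma ctq_conj (M L P : Mat2) (hdP : P.det ≠ 0) (h : M * P = P * L) :
    ∃ C : Mat2, C.det = 1 ∧ C * M * C⁻¹ = L := by
  obtain ⟨t, ht⟩ := IsAlgClosed.exists_pow_nat_eq (k := ℂ) (P.det)⁻¹ (n := 2) (by norm_num)
  set Q := t • P with hQdef
  have hdQ : Q.det = 1 := by
    rw [hQdef, Matrix.det_smul]
    simp only [Fintype.card_fin, ht]
    field_simp
  have hu : IsUnit Q.det := by rw [hdQ]; exact isUnit_one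
  have hQ : M * Q = Q * L := by
    rw [hQdef, Matrix.mul_smul, Matrix.smul_mul, h]
  refine ⟨Q⁻¹, ?_, ?_⟩
  · rw [Matrix.det_nonsing_inv, hdQ, Ring.inverse_one]
  · rw [Matrix.nonsing_inv_nonsing_inv Q hu, mul_assoc, hQ, ← mul_assoc,
      Matrix.nonsing_inv_mul Q hu, one_mul]

lemma ctq_diag (M : Mat2) (l e : ℂ) (hle : l * e = 1) (hne : l ≠ e)
    (hdet : M.det = 1) (htr : M.trace = l + e) :
    ∃ C : Mat2, C.det = 1 ∧ C * M * C⁻¹ = !![l, 0; 0, e] := by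
  set a := M 0 0 with ha'; set b := M 0 1 with hb'
  set c := M 1 0 with hc'; set d := M 1 1 with hd'
  have hM : M = !![a, b; c, d] := Matrix.eta_fin_two M
  rw [Matrix.det_fin_two] at hdet
  rw [Matrix.trace_fin_two] at htr
  have hsub : l - e ≠ 0 := sub_ne_zero.mpr hne
  have hsub' : e - l ≠ 0 := fun h => hsub (by linear_combination -h)
  by_cases hb : b ≠ 0
  · apply ctq_conj M _ !![b, b; l - a, e - a]
    · rw [Matrix.det_fin_two_of]
      intro h0
      exact hb (by
        rcases mul_eq_zero.mp (show b * (e - l) = 0 by linear_combination h0) with h | h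
        · exact h
        · exact absurd h hsub')
    · rw [hM]; ext i j
      fin_cases i <;> fin_cases j <;> simp [Matrix.mul_apply, Fin.sum_univ_two]
      · ring
      · ring
      · linear_combination -hdet + l*htr + hle
      · linear_combination -hdet + e*htr + hle
  · push_neg at hb
    have hae : (a - l) * (a - e) = 0 := by linear_combination a * htr + hle - hdet - c * hb
    rcases mul_eq_zero.mp hae with ha | ha
    · have ha : a = l := by linear_combination ha
      have hd : d = e := by linear_combination htr - ha
      apply ctq_conj M _ !![l - e, 0; c, 1]
      · rw [Matrix.det_fin_two_of]; intro h0; exact hsub (by linear_combination h0)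
      · rw [hM]; ext i j
        fin_cases i <;> fin_cases j <;> simp [Matrix.mul_apply, Fin.sum_univ_two]
        · linear_combination (l-e)*ha + c*hb
        · exact hb
        · linear_combination c * hd
        · exact hd
    · have ha : a = e := by linear_combination ha
      have hd : d = l := by linear_combination htr - ha
      apply ctq_conj M _ !![0, e - l; 1, c]
      · rw [Matrix.det_fin_two_of]; intro h0; exact hsub' (by linear_combination -h0)
      · rw [hM]; ext i j
        fin_cases i <;> fin_cases j <;> simp [Matrix.mul_apply, Fin.sum_univ_two]
        · exact hb
        · linear_combination (e-l)*ha + c*hb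
        · exact hd
        · linear_combination c * hd

lemma ctq_jordan (N : Mat2) (hN : N ≠ 0) (htr : N.trace = 0) (hdet : N.det = 0) :
    ∃ C : Mat2, C.det = 1 ∧ C * N * C⁻¹ = !![0, 1; 0, 0] := by
  set x := N 0 0 with hx'; set y := N 0 1 with hy'
  set z := N 1 0 with hz'; set w := N 1 1 with hw'
  have hM : N = !![x, y; z, w] := Matrix.eta_fin_two N
  rw [Matrix.det_fin_two] at hdet
  rw [Matrix.trace_fin_two] at htr
  by_cases hz : z ≠ 0
  · apply ctq_conj N _ !![x, 1; z, 0]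
    · rw [Matrix.det_fin_two_of]; intro h0; exact hz (by linear_combination -h0)
    · rw [hM]; ext i j
      fin_cases i <;> fin_cases j <;>
        simp [Matrix.mul_apply, Fin.sum_univ_two, -mul_eq_zero]
      · linear_combination x * htr - hdet
      · linear_combination z * htr
  · push_neg at hz
    have hx0 : x = 0 := by
      have : x * x = 0 := by linear_combination x * htr - hdet - y * hz
      exact (mul_self_eq_zero).mp this
    have hw0 : w = 0 := by linear_combination htr - hx0
    have hy : y ≠ 0 := by
      intro hy0
      exact hN (by rw [hM, hx0, hy0, hz, hw0]; ext i j; fin_cases i <;> fin_cases j <;> simp)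
    apply ctq_conj N _ !![y, 0; 0, 1]
    · rw [Matrix.det_fin_two_of]; simpa using hy
    · rw [hM]; ext i j
      fin_cases i <;> fin_cases j <;>
        simp [Matrix.mul_apply, Fin.sum_univ_two, -mul_eq_zero]
      · linear_combination y * hx0
      · linear_combination y * hz
      · linear_combination hw0

lemma ctq_eigen {G : Type*} [Group G] (ρ : G →* Matrix.SpecialLinearGroup (Fin 2) ℂ)
    (C : Mat2) (hC : C.det = 1) (w : Fin 2 → ℂ) (hw : w ≠ 0) (c : G → ℂ)
    (h : ∀ g, (C * (ρ g : Mat2) * C⁻¹).mulVec w = c g • w) :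
    ∃ v : Fin 2 → ℂ, v ≠ 0 ∧ ∀ g : G, ∃ c' : ℂ, ((ρ g : Mat2)).mulVec v = c' • v := by
  have hu : IsUnit C.det := by rw [hC]; exact isUnit_one
  refine ⟨C⁻¹.mulVec w, ?_, ?_⟩
  · intro h0
    apply hw
    have : C.mulVec (C⁻¹.mulVec w) = w := by
      rw [Matrix.mulVec_mulVec, Matrix.mul_nonsing_inv C hu, Matrix.one_mulVec]
    rw [h0, Matrix.mulVec_zero] at this
    exact this.symm
  · intro g
    refine ⟨c g, ?_⟩
    have key : (ρ g : Mat2) * C⁻¹ = C⁻¹ * (C * (ρ g : Mat2) * C⁻¹) := by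
      rw [← mul_assoc, ← mul_assoc, Matrix.nonsing_inv_mul C hu, one_mul]
    calc ((ρ g : Mat2)).mulVec (C⁻¹.mulVec w)
        = ((ρ g : Mat2) * C⁻¹).mulVec w := Matrix.mulVec_mulVec w _ _
      _ = (C⁻¹ * (C * (ρ g : Mat2) * C⁻¹)).mulVec w := by rw [key]
      _ = C⁻¹.mulVec ((C * (ρ g : Mat2) * C⁻¹).mulVec w) := (Matrix.mulVec_mulVec w _ _).symm
      _ = C⁻¹.mulVec (c g • w) := by rw [h g]
      _ = c g • C⁻¹.mulVec w := Matrix.mulVec_smul _ _ _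

lemma ctq_e1_ne : (![1, 0] : Fin 2 → ℂ) ≠ 0 := by
  intro h; have := congrFun h 0; simp at this

lemma ctq_e2_ne : (![0, 1] : Fin 2 → ℂ) ≠ 0 := by
  intro h; have := congrFun h 1; simp at this

lemma ctq_cancel (C X : Mat2) (hu : IsUnit C.det) : C⁻¹ * (C * X * C⁻¹) * C = X := by
  calc C⁻¹ * (C * X * C⁻¹) * C = (C⁻¹ * C) * X * (C⁻¹ * C) := by simp only [Matrix.mul_assoc]
  _ = X := by rw [Matrix.nonsing_inv_mul C hu, one_mul, mul_one]

lemma ctq_sigma {G : Type*} [Group G] (ρ : G →* Matrix.SpecialLinearGroup (Fin 2) ℂ)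
    (C : Mat2) (hC : C.det = 1) :
    ∃ σ : G → Mat2, (∀ g, σ g = C * (ρ g : Mat2) * C⁻¹) ∧
      (∀ g h, σ (g * h) = σ g * σ h) ∧
      (∀ g, (σ g).trace = ((ρ g : Mat2)).trace) := by
  have hu : IsUnit C.det := by rw [hC]; exact isUnit_one
  refine ⟨fun g => C * (ρ g : Mat2) * C⁻¹, fun g => rfl, ?_, ?_⟩
  · intro g h
    show C * (ρ (g * h) : Mat2) * C⁻¹ = _
    rw [_root_.map_mul ρ g h, Matrix.SpecialLinearGroup.coe_mul]
    show _ = (C * (ρ g : Mat2) * C⁻¹) * (C * (ρ h : Mat2) * C⁻¹)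
    simp only [Matrix.mul_assoc]
    rw [show C⁻¹ * (C * ((ρ h : Mat2) * C⁻¹)) = (ρ h : Mat2) * C⁻¹ from by
      rw [← Matrix.mul_assoc, Matrix.nonsing_inv_mul C hu, one_mul]]
  · intro g
    show (C * (ρ g : Mat2) * C⁻¹).trace = _
    rw [Matrix.trace_mul_comm, ← Matrix.mul_assoc, Matrix.nonsing_inv_mul C hu, one_mul]

lemma ctq_red {G : Type*} [Group G] (ρ : G →* Matrix.SpecialLinearGroup (Fin 2) ℂ)
    (h2 : ∀ g : G, ((ρ g : Mat2)).trace = 2 ∨ ((ρ g : Mat2)).trace = -2) :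
    ∃ v : Fin 2 → ℂ, v ≠ 0 ∧ ∀ g : G, ∃ c : ℂ, ((ρ g : Mat2)).mulVec v = c • v := by
  obtain ⟨ε, hεspec⟩ : ∃ ε : G → ℂ, ∀ g : G,
      ((ρ g : Mat2)).trace = 2 * ε g ∧ (ε g = 1 ∨ ε g = -1) := by
    refine ⟨fun g => ((ρ g : Mat2)).trace / 2, fun g => ⟨by ring, ?_⟩⟩
    rcases h2 g with h | h <;> [left; right] <;> simp only [h] <;> norm_num
  have htrg : ∀ g, ((ρ g : Mat2)).trace = 2 * ε g := fun g => (hεspec g).1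
  have hε : ∀ g, ε g = 1 ∨ ε g = -1 := fun g => (hεspec g).2
  have hε2 : ∀ g, ε g * ε g = 1 := by
    intro g; rcases hε g with h | h <;> rw [h] <;> norm_num
  obtain ⟨Mm, hMspec⟩ : ∃ Mm : G → Mat2, ∀ g : G, Mm g = ε g • ((ρ g : Mat2)) - 1 :=
    ⟨fun g => ε g • ((ρ g : Mat2)) - 1, fun g => rfl⟩
  have hρeq : ∀ g, (ρ g : Mat2) = ε g • (1 + Mm g) := by
    intro g
    have h1 : ε g • (1 + Mm g) = ε g • (ε g • (ρ g : Mat2)) := by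
      rw [hMspec g]; congr 1; abel
    rw [h1, smul_smul, hε2, one_smul]
  have hMtr : ∀ g, (Mm g).trace = 0 := by
    intro g
    rw [hMspec g]
    simp only [Matrix.trace_sub, Matrix.trace_smul, Matrix.trace_one, htrg g]
    simp [smul_eq_mul]
    linear_combination 2 * hε2 g
  have hMdet : ∀ g, (Mm g).det = 0 := by
    intro g
    have hd : ((ρ g : Mat2)).det = 1 := (ρ g).prop
    rw [Matrix.det_fin_two] at hd ⊢
    have ht := htrg g
    rw [Matrix.trace_fin_two] at ht
    have e00 : Mm g 0 0 = ε g * (ρ g : Mat2) 0 0 - 1 := by rw [hMspec g]; simp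
    have e01 : Mm g 0 1 = ε g * (ρ g : Mat2) 0 1 := by rw [hMspec g]; simp [Matrix.one_apply]
    have e10 : Mm g 1 0 = ε g * (ρ g : Mat2) 1 0 := by rw [hMspec g]; simp [Matrix.one_apply]
    have e11 : Mm g 1 1 = ε g * (ρ g : Mat2) 1 1 - 1 := by rw [hMspec g]; simp
    rw [e00, e01, e10, e11]
    linear_combination (ε g * ε g) * hd - ε g * ht - hε2 g
  by_cases hall : ∀ g : G, Mm g = 0
  · -- every ρ g is ± identity
    refine ⟨![1, 0], ctq_e1_ne, fun g => ⟨ε g, ?_⟩⟩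
    have : (ρ g : Mat2) = ε g • (1 : Mat2) := by rw [hρeq g, hall g, add_zero]
    rw [this, Matrix.smul_mulVec, Matrix.one_mulVec]
  · push_neg at hall
    obtain ⟨g₁, hg₁⟩ := hall
    obtain ⟨C, hC, hCN⟩ := ctq_jordan (Mm g₁) hg₁ (hMtr g₁) (hMdet g₁)
    have hu : IsUnit C.det := by rw [hC]; exact isUnit_one
    obtain ⟨T, hTspec⟩ : ∃ T : G → Mat2, ∀ g : G, T g = C * Mm g * C⁻¹ :=
      ⟨fun g => C * Mm g * C⁻¹, fun g => rfl⟩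
    obtain ⟨σ, hσspec⟩ : ∃ σ : G → Mat2, ∀ g : G, σ g = C * (ρ g : Mat2) * C⁻¹ :=
      ⟨fun g => C * (ρ g : Mat2) * C⁻¹, fun g => rfl⟩
    have hσe : ∀ g, σ g = ε g • (1 + T g) := by
      intro g
      rw [hσspec g, hTspec g, hρeq g, Matrix.mul_smul, Matrix.smul_mul]
      congr 1
      rw [Matrix.mul_add, Matrix.mul_one, Matrix.add_mul, Matrix.mul_nonsing_inv C hu]
    have hTg₁ : T g₁ = !![0, 1; 0, 0] := by rw [hTspec g₁]; exact hCN
    have hTtr : ∀ g, T g 0 0 + T g 1 1 = 0 := by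
      intro g
      have : (T g).trace = (Mm g).trace := by
        rw [hTspec g, Matrix.trace_mul_comm, ← mul_assoc, Matrix.nonsing_inv_mul C hu, one_mul]
      rw [← Matrix.trace_fin_two, this, hMtr g]
    have hTdet : ∀ g, T g 0 0 * T g 1 1 - T g 0 1 * T g 1 0 = 0 := by
      intro g
      rw [← Matrix.det_fin_two, hTspec g, Matrix.det_mul, Matrix.det_mul, hMdet g]
      ring
    have hσmul : ∀ g h : G, σ (g * h) = σ g * σ h := by
      intro g h
      rw [hσspec, hσspec, hσspec, _root_.map_mul ρ g h, Matrix.SpecialLinearGroup.coe_mul]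
      simp only [Matrix.mul_assoc]
      rw [show C⁻¹ * (C * ((ρ h : Mat2) * C⁻¹)) = (ρ h : Mat2) * C⁻¹ from by
        rw [← Matrix.mul_assoc, Matrix.nonsing_inv_mul C hu, one_mul]]
    have hσtr : ∀ g, (σ g).trace = 2 * ε g := by
      intro g
      have : (σ g).trace = ((ρ g : Mat2)).trace := by
        rw [hσspec g, Matrix.trace_mul_comm, ← mul_assoc, Matrix.nonsing_inv_mul C hu, one_mul]
      rw [this, htrg g]
    have hσ00 : ∀ g, σ g 0 0 = ε g * (1 + T g 0 0) := by
      intro g; rw [hσe g]; simp [Matrix.one_apply]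
    have hσ01 : ∀ g, σ g 0 1 = ε g * T g 0 1 := by
      intro g; rw [hσe g]; simp [Matrix.one_apply]
    have hσ10 : ∀ g, σ g 1 0 = ε g * T g 1 0 := by
      intro g; rw [hσe g]; simp [Matrix.one_apply]
    have hσ11 : ∀ g, σ g 1 1 = ε g * (1 + T g 1 1) := by
      intro g; rw [hσe g]; simp [Matrix.one_apply]
    have htrmul : ∀ g h : G, 2 * ε (g * h) =
        σ g 0 0 * σ h 0 0 + σ g 0 1 * σ h 1 0 + (σ g 1 0 * σ h 0 1 + σ g 1 1 * σ h 1 1) := by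
      intro g h
      rw [← hσtr (g * h), hσmul g h, Matrix.trace_fin_two]
      simp [Matrix.mul_apply, Fin.sum_univ_two]
    have hσg₁ : σ g₁ = ε g₁ • !![1, 1; 0, 1] := by
      rw [hσe g₁, hTg₁]
      congr 1
      ext i j
      fin_cases i <;> fin_cases j <;> simp [Matrix.one_apply]
    have hsq : σ (g₁ * g₁) = !![(1 : ℂ), 2; 0, 1] := by
      rw [hσmul, hσg₁, Matrix.smul_mul, Matrix.mul_smul, smul_smul, hε2, one_smul,
        Matrix.mul_fin_two]
      norm_num
    have hz0 : ∀ h : G, T h 1 0 = 0 := by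
      intro h
      have e1 : 2 * ε (g₁ * h) = ε g₁ * ε h * (2 + T h 1 0) := by
        rw [htrmul g₁ h, hσg₁, hσ00 h, hσ01 h, hσ10 h, hσ11 h]
        simp only [Matrix.smul_apply, Matrix.of_apply, Matrix.cons_val', Matrix.cons_val_zero,
          Matrix.cons_val_one, Matrix.head_cons, Matrix.empty_val',
          Matrix.cons_val_fin_one, Matrix.head_fin_const, smul_eq_mul]
        linear_combination (ε g₁ * ε h) * hTtr h
      have e2 : 2 * ε (g₁ * g₁ * h) = ε h * (2 + 2 * T h 1 0) := by
        rw [htrmul (g₁ * g₁) h, hsq, hσ00 h, hσ01 h, hσ10 h, hσ11 h]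
        simp only [Matrix.of_apply, Matrix.cons_val', Matrix.cons_val_zero, Matrix.cons_val_one,
          Matrix.head_cons, Matrix.empty_val', Matrix.cons_val_fin_one, Matrix.head_fin_const]
        linear_combination (ε h) * hTtr h
      have hz14 : T h 1 0 = 0 ∨ T h 1 0 = -4 := by
        rcases hε (g₁ * h) with h1 | h1 <;> rcases hε g₁ with h2 | h2 <;>
          rcases hε h with h3 | h3 <;> rw [h1, h2, h3] at e1 <;>
          first
            | (left; linear_combination e1)
            | (left; linear_combination -e1)
            | (right; linear_combination e1)
            | (right; linear_combination -e1)
      have hz12 : T h 1 0 = 0 ∨ T h 1 0 = -2 := by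
        rcases hε (g₁ * g₁ * h) with h1 | h1 <;> rcases hε h with h3 | h3 <;>
          rw [h1, h3] at e2 <;>
          first
            | (left; linear_combination e2 / 2)
            | (left; linear_combination -e2 / 2)
            | (right; linear_combination e2 / 2)
            | (right; linear_combination -e2 / 2)
      rcases hz14 with h0 | h4
      · exact h0
      rcases hz12 with h0 | h2
      · exact h0
      rw [h4] at h2
      norm_num at h2
    have h11 : ∀ h : G, T h 1 1 = 0 := by
      intro h
      have hd := hTdet h
      rw [hz0 h] at hd
      have : T h 1 1 * T h 1 1 = 0 := by linear_combination (T h 1 1) * hTtr h - hd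
      exact mul_self_eq_zero.mp this
    have h00 : ∀ h : G, T h 0 0 = 0 := by
      intro h
      have := hTtr h
      rw [h11 h] at this
      linear_combination this
    apply ctq_eigen ρ C hC ![1, 0] ctq_e1_ne ε
    intro g
    rw [← hσspec g]
    ext i
    fin_cases i <;>
      simp [Matrix.mulVec, dotProduct, Fin.sum_univ_two, hσ00, hσ10, h00, hz0]

/-- An irreducible `SL(2,ℂ)`-representation of a group is determined up to
conjugacy by its character `g ↦ tr ρ(g)`. -/
theorem conj_of_trace_eq {G : Type*} [Group G]
    (ρ₁ ρ₂ : G →* Matrix.SpecialLinearGroup (Fin 2) ℂ)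
    (hirr : ¬ ∃ v : Fin 2 → ℂ, v ≠ 0 ∧ ∀ g : G, ∃ c : ℂ,
      Matrix.mulVec (ρ₁ g : Matrix (Fin 2) (Fin 2) ℂ) v = c • v)
    (htr : ∀ g : G, Matrix.trace (ρ₁ g : Matrix (Fin 2) (Fin 2) ℂ) =
      Matrix.trace (ρ₂ g : Matrix (Fin 2) (Fin 2) ℂ)) :
    ∃ A : Matrix.SpecialLinearGroup (Fin 2) ℂ,
      ∀ g : G, ρ₂ g = A * ρ₁ g * A⁻¹ := by
  by_cases hg0 : ∃ g : G, (ρ₁ g : Mat2).trace ≠ 2 ∧ (ρ₁ g : Mat2).trace ≠ -2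
  swap
  · push_neg at hg0
    exfalso
    apply hirr
    apply ctq_red ρ₁
    intro g
    by_cases h : (ρ₁ g : Mat2).trace = 2
    · exact Or.inl h
    · exact Or.inr (hg0 g h)
  obtain ⟨g₀, hτ1, hτ2⟩ := hg0
  obtain ⟨s, hs⟩ := IsAlgClosed.exists_pow_nat_eq (k := ℂ)
    ((ρ₁ g₀ : Mat2).trace ^ 2 - 4) (n := 2) (by norm_num)
  obtain ⟨l, e, hle, hsum, hne⟩ : ∃ l e : ℂ, l * e = 1 ∧ l + e = (ρ₁ g₀ : Mat2).trace ∧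
      l ≠ e := by
    refine ⟨((ρ₁ g₀ : Mat2).trace + s) / 2, ((ρ₁ g₀ : Mat2).trace - s) / 2,
      by linear_combination (-1/4 : ℂ) * hs, by ring, ?_⟩
    intro h
    have hs0 : s = 0 := by linear_combination h
    rw [hs0] at hs
    have : ((ρ₁ g₀ : Mat2).trace - 2) * ((ρ₁ g₀ : Mat2).trace + 2) = 0 := by
      linear_combination -hs
    rcases mul_eq_zero.mp this with h' | h'
    · exact hτ1 (by linear_combination h')
    · exact hτ2 (by linear_combination h')
  obtain ⟨C₁, hC₁, hΛ₁⟩ := ctq_diag (ρ₁ g₀ : Mat2) l e hle hne (ρ₁ g₀).prop hsum.symm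
  obtain ⟨C₂, hC₂, hΛ₂⟩ := ctq_diag (ρ₂ g₀ : Mat2) l e hle hne (ρ₂ g₀).prop
    (by rw [← htr g₀]; exact hsum.symm)
  have hu₁ : IsUnit C₁.det := by rw [hC₁]; exact isUnit_one
  have hu₂ : IsUnit C₂.det := by rw [hC₂]; exact isUnit_one
  obtain ⟨σ₁, hσ₁spec, hσ₁mul, hσ₁tr⟩ := ctq_sigma ρ₁ C₁ hC₁
  obtain ⟨σ₂, hσ₂spec, hσ₂mul, hσ₂tr⟩ := ctq_sigma ρ₂ C₂ hC₂
  have hσ₁g₀ : σ₁ g₀ = !![l, 0; 0, e] := by rw [hσ₁spec]; exact hΛ₁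
  have hσ₂g₀ : σ₂ g₀ = !![l, 0; 0, e] := by rw [hσ₂spec]; exact hΛ₂
  have htrσ : ∀ g, (σ₁ g).trace = (σ₂ g).trace := by
    intro g; rw [hσ₁tr, hσ₂tr, htr]
  have hexp : ∀ X Y : Mat2, (X * Y).trace =
      X 0 0 * Y 0 0 + X 0 1 * Y 1 0 + (X 1 0 * Y 0 1 + X 1 1 * Y 1 1) := by
    intro X Y
    rw [Matrix.trace_fin_two]
    simp [Matrix.mul_apply, Fin.sum_univ_two]
  have hlam : ∀ X : Mat2, (!![l, 0; 0, e] * X) 0 0 = l * X 0 0 ∧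
      (!![l, 0; 0, e] * X) 0 1 = l * X 0 1 ∧ (!![l, 0; 0, e] * X) 1 0 = e * X 1 0 ∧
      (!![l, 0; 0, e] * X) 1 1 = e * X 1 1 := by
    intro X
    refine ⟨?_, ?_, ?_, ?_⟩ <;> simp [Matrix.mul_apply, Fin.sum_univ_two]
  have hnel : l - e ≠ 0 := sub_ne_zero.mpr hne
  -- diagonal entries agree
  have had : ∀ h : G, σ₁ h 0 0 = σ₂ h 0 0 ∧ σ₁ h 1 1 = σ₂ h 1 1 := by
    intro h
    have E1 : σ₁ h 0 0 + σ₁ h 1 1 = σ₂ h 0 0 + σ₂ h 1 1 := by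
      have := htrσ h; rwa [Matrix.trace_fin_two, Matrix.trace_fin_two] at this
    have E2 : l * σ₁ h 0 0 + e * σ₁ h 1 1 = l * σ₂ h 0 0 + e * σ₂ h 1 1 := by
      have t1 := htrσ (g₀ * h)
      rw [hσ₁mul, hσ₂mul, hσ₁g₀, hσ₂g₀, Matrix.trace_fin_two, Matrix.trace_fin_two,
        (hlam (σ₁ h)).1, (hlam (σ₁ h)).2.2.2, (hlam (σ₂ h)).1, (hlam (σ₂ h)).2.2.2] at t1
      exact t1
    constructor
    · apply mul_left_cancel₀ hnel
      linear_combination E2 - e * E1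
    · apply mul_left_cancel₀ hnel
      linear_combination l * E1 - E2
  -- star identity
  have hstar : ∀ h k : G, σ₁ h 0 1 * σ₁ k 1 0 + σ₁ h 1 0 * σ₁ k 0 1 =
      σ₂ h 0 1 * σ₂ k 1 0 + σ₂ h 1 0 * σ₂ k 0 1 := by
    intro h k
    have t1 := htrσ (h * k)
    rw [hσ₁mul, hσ₂mul, hexp, hexp] at t1
    linear_combination t1 - σ₂ k 0 0 * (had h).1 - σ₁ h 0 0 * (had k).1
      - σ₂ k 1 1 * (had h).2 - σ₁ h 1 1 * (had k).2
  -- the rank-one identity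
  have h3 : ∀ h k : G, σ₁ h 1 0 * σ₁ k 0 1 = σ₂ h 1 0 * σ₂ k 0 1 := by
    intro h k
    have t2 := hstar (g₀ * h) k
    rw [hσ₁mul, hσ₂mul, hσ₁g₀, hσ₂g₀,
      (hlam (σ₁ h)).2.1, (hlam (σ₁ h)).2.2.1, (hlam (σ₂ h)).2.1, (hlam (σ₂ h)).2.2.1] at t2
    apply mul_left_cancel₀ (sub_ne_zero.mpr (Ne.symm hne))
    linear_combination t2 - l * hstar h k
  -- irreducibility gives nonvanishing off-diagonal entries of σ₁
  have hp : ∃ p : G, σ₁ p 0 1 ≠ 0 := by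
    by_contra hnp
    push_neg at hnp
    refine absurd (ctq_eigen ρ₁ C₁ hC₁ ![0, 1] ctq_e2_ne (fun g => σ₁ g 1 1) ?_) hirr
    intro g
    rw [← hσ₁spec g]
    ext i
    fin_cases i <;> simp [Matrix.mulVec, dotProduct, Fin.sum_univ_two, hnp g]
  have hq : ∃ q : G, σ₁ q 1 0 ≠ 0 := by
    by_contra hnq
    push_neg at hnq
    refine absurd (ctq_eigen ρ₁ C₁ hC₁ ![1, 0] ctq_e1_ne (fun g => σ₁ g 0 0) ?_) hirr
    intro g
    rw [← hσ₁spec g]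
    ext i
    fin_cases i <;> simp [Matrix.mulVec, dotProduct, Fin.sum_univ_two, hnq g]
  obtain ⟨p, hp⟩ := hp
  obtain ⟨q, hq⟩ := hq
  have hprod : σ₂ q 1 0 * σ₂ p 0 1 ≠ 0 := by
    rw [← h3 q p]; exact mul_ne_zero hq hp
  have hc2q : σ₂ q 1 0 ≠ 0 := left_ne_zero_of_mul hprod
  have hb2p : σ₂ p 0 1 ≠ 0 := right_ne_zero_of_mul hprod
  have hb2 : ∀ h : G, σ₂ h 0 1 = (σ₁ q 1 0 / σ₂ q 1 0) * σ₁ h 0 1 := by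
    intro h
    rw [div_mul_eq_mul_div, eq_div_iff hc2q]
    linear_combination -h3 q h
  have hc2 : ∀ h : G, σ₂ h 1 0 = (σ₂ q 1 0 / σ₁ q 1 0) * σ₁ h 1 0 := by
    intro h
    rw [div_mul_eq_mul_div, eq_div_iff hq]
    apply mul_left_cancel₀ hb2p
    linear_combination (-(σ₁ q 1 0)) * h3 h p + σ₁ h 1 0 * h3 q p
  -- build the conjugating diagonal matrix
  obtain ⟨t, ht⟩ := IsAlgClosed.exists_pow_nat_eq (k := ℂ) (σ₁ q 1 0 / σ₂ q 1 0)
    (n := 2) (by norm_num)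
  have hsne : σ₁ q 1 0 / σ₂ q 1 0 ≠ 0 := div_ne_zero hq hc2q
  have ht0 : t ≠ 0 := by
    intro h0; rw [h0] at ht; exact hsne (by simpa using ht.symm)
  have hDdet : (!![t, 0; 0, t⁻¹] : Mat2).det = 1 := by
    rw [Matrix.det_fin_two_of]
    field_simp
    simp
  have hDinv : (!![t, 0; 0, t⁻¹] : Mat2)⁻¹ = !![t⁻¹, 0; 0, t] := by
    apply Matrix.inv_eq_right_inv
    rw [Matrix.mul_fin_two]
    ext i j
    fin_cases i <;> fin_cases j <;>
      simp [Matrix.one_apply, mul_inv_cancel₀ ht0, inv_mul_cancel₀ ht0]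
  have hDσ : ∀ h : G, !![t, 0; 0, t⁻¹] * σ₁ h * (!![t, 0; 0, t⁻¹] : Mat2)⁻¹ = σ₂ h := by
    intro h
    rw [hDinv, Matrix.eta_fin_two (σ₁ h), Matrix.mul_fin_two, Matrix.mul_fin_two,
      Matrix.eta_fin_two (σ₂ h)]
    have e00 := (had h).1
    have e11 := (had h).2
    have e01 := hb2 h
    have e10 := hc2 h
    have hQ : σ₂ q 1 0 / σ₁ q 1 0 = (t ^ 2)⁻¹ := by rw [ht, inv_div]
    ext i j
    fin_cases i <;> fin_cases j <;>
      simp only [Fin.zero_eta, Fin.mk_one, Fin.isValue, Matrix.of_apply, Matrix.cons_val',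
        Matrix.cons_val_zero, Matrix.cons_val_one, Matrix.head_cons, Matrix.empty_val',
        Matrix.cons_val_fin_one, Matrix.head_fin_const, mul_zero, zero_mul, add_zero,
        zero_add, mul_one, one_mul]
    · rw [← e00, mul_comm t (σ₁ h 0 0), mul_assoc, mul_inv_cancel₀ ht0, mul_one]
    · rw [e01, ← ht]; ring
    · rw [e10, hQ, pow_two, mul_inv]; ring
    · rw [← e11, mul_comm t⁻¹ (σ₁ h 1 1), mul_assoc, inv_mul_cancel₀ ht0, mul_one]
  have hDu : IsUnit (!![t, 0; 0, t⁻¹] : Mat2).det := by rw [hDdet]; exact isUnit_one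
  have hAdet : (C₂⁻¹ * (!![t, 0; 0, t⁻¹] * C₁)).det = 1 := by
    rw [Matrix.det_mul, Matrix.det_mul, Matrix.det_nonsing_inv, hC₂, Ring.inverse_one,
      hDdet, hC₁]
    ring
  have hAinv : (C₂⁻¹ * (!![t, 0; 0, t⁻¹] * C₁))⁻¹ =
      C₁⁻¹ * (!![t, 0; 0, t⁻¹] : Mat2)⁻¹ * C₂ := by
    rw [Matrix.mul_inv_rev, Matrix.mul_inv_rev, Matrix.nonsing_inv_nonsing_inv C₂ hu₂]
  have hmain : ∀ g : G, (ρ₂ g : Mat2) =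
      (C₂⁻¹ * (!![t, 0; 0, t⁻¹] * C₁)) * (ρ₁ g : Mat2) *
        (C₁⁻¹ * (!![t, 0; 0, t⁻¹] : Mat2)⁻¹ * C₂) := by
    intro g
    have h1 : (ρ₂ g : Mat2) = C₂⁻¹ * σ₂ g * C₂ := by
      rw [hσ₂spec g, ctq_cancel C₂ _ hu₂]
    rw [h1, ← hDσ g, hσ₁spec g]
    simp only [Matrix.mul_assoc]
  refine ⟨⟨_, hAdet⟩, fun g => ?_⟩
  apply Subtype.coe_injective
  beta_reduce
  erw [Matrix.SpecialLinearGroup.coe_mul, Matrix.SpecialLinearGroup.coe_mul,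
    Matrix.SpecialLinearGroup.coe_inv]
  have hadj : (C₂⁻¹ * (!![t, 0; 0, t⁻¹] * C₁)).adjugate =
      (C₂⁻¹ * (!![t, 0; 0, t⁻¹] * C₁))⁻¹ := by
    rw [Matrix.inv_def (C₂⁻¹ * (!![t, 0; 0, t⁻¹] * C₁)), hAdet, Ring.inverse_one, one_smul]
  simp only [← Matrix.inv_def]
  rw [hadj, hAinv]
  exact hmain g
end
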